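/- Let 𝔞 = V ⊕ S′ ⊕ 𝔥 be a graded subalgebra of the flat model superalgebra 𝔰 with κ|_{⊙²S′} surjective onto V (e.g. 𝔞 highly supersymmetric). Then the degree-4 Spencer differential ∂ : Hom(Λ²V, 𝔥) → Hom(Λ³V,V) ⊕ Hom(Λ²V⊗S′,S′) ⊕ Hom(V⊗⊙²S′,𝔥) is injective; in particular every θ : Λ²V → 𝔥 with θ(v, κ(s,s)) = 0 for all v ∈ V and s ∈ S′ vanishes, so H^{4,2}(𝔞_-;𝔞) = 0. -/
import Mathlib


/-- let `𝔞 = V ⊕ S′ ⊕ 𝔥` be a graded subalgebra of the flat model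
superalgebra with `κ|_{⊙²S′}` surjective onto `V` (e.g. `𝔞` highly supersymmetric).
Then the degree-4 Spencer differential is injective on `Hom(Λ²V, 𝔥)`: every alternating
`θ : Λ²V → 𝔥` with `θ(v, κ(s,s)) = 0` for all `v ∈ V` and `s ∈ S′` vanishes; in
particular `H^{4,2}(𝔞_-;𝔞) = 0`. -/
theorem spencer_42_vanishes
    (V S H : Type*) [AddCommGroup V] [Module ℝ V]
    [AddCommGroup S] [Module ℝ S] [AddCommGroup H] [Module ℝ H]
    (κ : S →ₗ[ℝ] S →ₗ[ℝ] V)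
    (hκ_symm : ∀ s t : S, κ s t = κ t s)
    (S' : Submodule ℝ S)
    (h_surj : Submodule.span ℝ {v : V | ∃ s ∈ S', ∃ t ∈ S', κ s t = v} = ⊤)
    (θ : V →ₗ[ℝ] V →ₗ[ℝ] H)
    (h_alt : ∀ v : V, θ v v = 0)
    (hθ : ∀ (v : V) (s : S), s ∈ S' → θ v (κ s s) = 0) :
    θ = 0 := by
  ext v w
  -- polarization: θ v (κ s t) = 0 for s, t ∈ S'
  have key : ∀ s ∈ S', ∀ t ∈ S', θ v (κ s t) = 0 := by
    intro s hs t ht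
    have h1 : θ v (κ (s + t) (s + t)) = 0 := hθ v _ (S'.add_mem hs ht)
    have h2 : κ (s + t) (s + t) = κ s s + κ t t + (2 : ℝ) • κ s t := by
      simp [map_add, LinearMap.add_apply, hκ_symm t s, two_smul]
      abel
    rw [h2, map_add, map_add, map_smul] at h1
    rw [hθ v s hs, hθ v t ht] at h1
    simpa using h1
  -- the set spans V, so θ v = 0
  have : Submodule.span ℝ {u : V | ∃ s ∈ S', ∃ t ∈ S', κ s t = u} ≤
      LinearMap.ker (θ v) := by
    rw [Submodule.span_le]
    rintro u ⟨s, hs, t, ht, rfl⟩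
    exact key s hs t ht
  rw [h_surj, top_le_iff] at this
  have := LinearMap.ker_eq_top.mp this
  simp [this]
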